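/- Let (X,d_X) be a metric space, S ⊆ X, r > 0, and let d_{X_r(S)} be the r-magnification of d_X at S. Then for any two distinct points x,y ∈ S we have d_{X_r(S)}(x,y) ≥ (2r+1)/(2r + diam(S,d_X)) · diam(S, d_{X_r(S)}), provided d_X(x,y) ≥ 1 for all distinct x,y ∈ S and S has finite diameter. -/
import Mathlib


open Classical in
/-- Distances in the magnified set `S` are at least `(2r+1)/(2r+diam(S,d_X))` times the
diameter of `S` in the magnified metric. -/
theorem stmt_1 {X : Type*} [MetricSpace X] (S : Set X) (r : ℝ) (hr : 0 < r)
    (d' : X → X → ℝ)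
    (hd' : ∀ x y : X, d' x y =
      if x = y then 0
      else dist x y + r * ((if x ∈ S then 1 else 0) + (if y ∈ S then 1 else 0)))
    (hsep : ∀ x ∈ S, ∀ y ∈ S, x ≠ y → 1 ≤ dist x y)
    (hbdd : BddAbove {t : ℝ | ∃ x ∈ S, ∃ y ∈ S, t = dist x y}) :
    ∀ x ∈ S, ∀ y ∈ S, x ≠ y →
      (2 * r + 1) / (2 * r + sSup {t : ℝ | ∃ x ∈ S, ∃ y ∈ S, t = dist x y}) *
          sSup {t : ℝ | ∃ x ∈ S, ∃ y ∈ S, t = d' x y} ≤ d' x y := by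
  intro x hx y hy hxy
  set D := sSup {t : ℝ | ∃ x ∈ S, ∃ y ∈ S, t = dist x y} with hD
  set D' := sSup {t : ℝ | ∃ x ∈ S, ∃ y ∈ S, t = d' x y} with hD'
  have hD0 : 0 ≤ D := le_csSup hbdd ⟨x, hx, x, hx, (dist_self x).symm⟩
  have hpos : 0 < 2 * r + D := by linarith
  have hxyval : d' x y = dist x y + 2 * r := by
    rw [hd' x y, if_neg hxy, if_pos hx, if_pos hy]; ring
  have hDle : D' ≤ D + 2 * r := by
    refine csSup_le ⟨d' x y, x, hx, y, hy, rfl⟩ ?_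
    rintro t ⟨a, ha, b, hb, rfl⟩
    rw [hd' a b]
    split_ifs with h
    · linarith
    · have : dist a b ≤ D := le_csSup hbdd ⟨a, ha, b, hb, rfl⟩
      linarith
  have h1 : (2 * r + 1) / (2 * r + D) * D' ≤ (2 * r + 1) / (2 * r + D) * (D + 2 * r) := by
    apply mul_le_mul_of_nonneg_left hDle
    positivity
  have h2 : (2 * r + 1) / (2 * r + D) * (D + 2 * r) = 2 * r + 1 := by
    rw [show D + 2 * r = 2 * r + D by ring, div_mul_cancel₀ _ (ne_of_gt hpos)]
  have h3 : 1 ≤ dist x y := hsep x hx y hy hxy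
  linarith
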